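/- There exist constants c > 0 and C > 0 such that for every arc I ⊆ 𝕋 and every w ∈ 𝔻, ∫_{S(I)} (1−|z|)^{-1}·𝟙_{D(z)}(w) dm(z) ≤ C·(1−|w|)·𝟙_{S(cI)}(w), where D(z) is the disc centered at z of radius (1/2)(1−|z|), S(I) is the Carleson box of I, and cI is the arc with the same midpoint as I and length c|I|. -/

import Mathlib

open Metric MeasureTheory

/-- The Carleson box `S(I)` of the arc `I ⊆ 𝕋` with midpoint `exp(iθ₀)` and arclength `ℓ`. -/
def carlesonBox (θ₀ ℓ : ℝ) : Set ℂ :=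
  {z : ℂ | z ∈ ball (0 : ℂ) 1 ∧ 1 - ‖z‖ ≤ ℓ ∧
    ∃ θ : ℝ, |θ - θ₀| ≤ ℓ / 2 ∧ z = (‖z‖ : ℂ) * Complex.exp (θ * Complex.I)}

lemma polar_eq (w : ℂ) (α : ℝ) :
    w = (‖w‖ : ℂ) *
      Complex.exp (((α + (w * Complex.exp (-(α:ℂ) * Complex.I)).arg : ℝ)) * Complex.I) := by
  have hc : -(α:ℂ) = ((-α : ℝ) : ℂ) := by push_cast; ring
  have h1 : ‖w * Complex.exp (-(α:ℂ) * Complex.I)‖ = ‖w‖ := by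
    rw [norm_mul, hc, Complex.norm_exp_ofReal_mul_I, mul_one]
  have h2 := Complex.norm_mul_exp_arg_mul_I (w * Complex.exp (-(α:ℂ) * Complex.I))
  rw [h1] at h2
  have h3 : Complex.exp (-(α:ℂ) * Complex.I) * Complex.exp ((α:ℂ) * Complex.I) = 1 := by
    rw [← Complex.exp_add]; ring_nf; exact Complex.exp_zero
  set δ := (w * Complex.exp (-(α:ℂ) * Complex.I)).arg
  have : ((α + δ : ℝ) : ℂ) * Complex.I = (δ:ℂ) * Complex.I + (α:ℂ) * Complex.I := by
    push_cast; ring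
  rw [this, Complex.exp_add, ← mul_assoc, h2]
  rw [mul_assoc, ← Complex.exp_add]
  norm_num

lemma carlesonBox_measurable (θ₀ ℓ : ℝ) : MeasurableSet (carlesonBox θ₀ ℓ) := by
  have himg : carlesonBox θ₀ ℓ =
      (ball (0:ℂ) 1 ∩ {z : ℂ | 1 - ‖z‖ ≤ ℓ}) ∩
      ((fun p : ℝ × ℝ => (p.1 : ℂ) * Complex.exp ((p.2 : ℂ) * Complex.I)) ''
        (Set.Icc 0 1 ×ˢ Set.Icc (θ₀ - ℓ/2) (θ₀ + ℓ/2))) := by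
    ext z
    constructor
    · rintro ⟨hz1, hz2, θ, hθ, hzeq⟩
      refine ⟨⟨hz1, hz2⟩, ⟨(‖z‖, θ), ⟨⟨norm_nonneg z, ?_⟩, ?_⟩, hzeq.symm⟩⟩
      · exact le_of_lt (by simpa using mem_ball_zero_iff.mp hz1)
      · have h := abs_le.mp hθ
        exact ⟨by linarith [h.1], by linarith [h.2]⟩
    · rintro ⟨⟨hz1, hz2⟩, ⟨⟨r, θ⟩, ⟨⟨hr0, _⟩, hθ⟩, hzeq⟩⟩
      refine ⟨hz1, hz2, θ, ?_, ?_⟩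
      · rw [abs_sub_le_iff]; constructor <;> [linarith [hθ.2]; linarith [hθ.1]]
      · have : ‖z‖ = r := by
          rw [← hzeq, norm_mul, Complex.norm_exp_ofReal_mul_I, mul_one, Complex.norm_real, Real.norm_eq_abs,
            abs_of_nonneg hr0]
        rw [this, ← hzeq]
  rw [himg]
  refine (measurableSet_ball.inter
      ((isClosed_le (continuous_const.sub continuous_norm) continuous_const).measurableSet)).inter ?_
  exact ((isCompact_Icc.prod isCompact_Icc).image (by fun_prop)).measurableSet

set_option maxHeartbeats 1000000 in
lemma mem_box_enlarge {θ₀ ℓ : ℝ} (hℓ : 0 < ℓ) {z w : ℂ}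
    (hz : z ∈ carlesonBox θ₀ ℓ) (hw : w ∈ ball (0:ℂ) 1)
    (hwz : w ∈ ball z ((1 - ‖z‖) / 2)) :
    w ∈ carlesonBox θ₀ (8 * Real.pi * ℓ) := by
  obtain ⟨hz1, hz2, θ₁, hθ₁, hzeq⟩ := hz
  have hπ := Real.pi_gt_three
  set a := ‖z‖ with ha
  set b := ‖w‖ with hb
  have hd : ‖w - z‖ < (1 - a) / 2 := by
    rw [mem_ball, Complex.dist_eq] at hwz; exact hwz
  have hd0 : 0 ≤ ‖w - z‖ := norm_nonneg _
  have h0 : 0 < 1 - a := by linarith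
  have htri1 : a - b ≤ ‖w - z‖ := by
    have := norm_sub_norm_le z w
    calc a - b ≤ ‖z - w‖ := this
      _ = ‖w - z‖ := norm_sub_rev z w
  have htri2 : b - a ≤ ‖w - z‖ := by
    have := norm_sub_norm_le w z
    exact this
  refine ⟨hw, by nlinarith, ?_⟩
  by_cases hcase : ℓ < 1/4
  · -- small arc: use angle of z
    set δ := (w * Complex.exp (-(θ₁:ℂ) * Complex.I)).arg with hδ
    refine ⟨θ₁ + δ, ?_, polar_eq w θ₁⟩
    have hb58 : (5:ℝ)/8 < b := by linarith
    have habs_u : ‖w * Complex.exp (-(θ₁:ℂ) * Complex.I)‖ = b := by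
      rw [norm_mul, show -(θ₁:ℂ) = ((-θ₁ : ℝ) : ℂ) by push_cast; ring,
        Complex.norm_exp_ofReal_mul_I, mul_one]
    have h2 := Complex.norm_mul_exp_arg_mul_I (w * Complex.exp (-(θ₁:ℂ) * Complex.I))
    rw [habs_u] at h2
    -- abs (w * exp(-θ₁ I) - b) < ℓ
    have hkey : ‖w * Complex.exp (-(θ₁:ℂ) * Complex.I) - (b:ℂ)‖ < ℓ := by
      have hee : Complex.exp ((θ₁:ℂ) * Complex.I) * Complex.exp (-(θ₁:ℂ) * Complex.I) = 1 := by
        rw [← Complex.exp_add]; ring_nf; exact Complex.exp_zero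
      have heq : w * Complex.exp (-(θ₁:ℂ) * Complex.I) - (b:ℂ)
          = (w - (b:ℂ) * Complex.exp ((θ₁:ℂ) * Complex.I)) * Complex.exp (-(θ₁:ℂ) * Complex.I) := by
        rw [sub_mul, mul_assoc, hee, mul_one]
      have habse : ‖Complex.exp (-(θ₁:ℂ) * Complex.I)‖ = 1 := by
        rw [show -(θ₁:ℂ) = ((-θ₁ : ℝ) : ℂ) by push_cast; ring, Complex.norm_exp_ofReal_mul_I]
      have hsplit : ‖w - (b:ℂ) * Complex.exp ((θ₁:ℂ) * Complex.I)‖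
          ≤ ‖w - z‖ + ‖z - (b:ℂ) * Complex.exp ((θ₁:ℂ) * Complex.I)‖ := by
        have := norm_add_le (w - z) (z - (b:ℂ) * Complex.exp ((θ₁:ℂ) * Complex.I))
        simpa using this
      have hzb : ‖z - (b:ℂ) * Complex.exp ((θ₁:ℂ) * Complex.I)‖ ≤ ‖w - z‖ := by
        have hzz : z - (b:ℂ) * Complex.exp ((θ₁:ℂ) * Complex.I)
            = ((a - b : ℝ) : ℂ) * Complex.exp ((θ₁:ℂ) * Complex.I) := by
          rw [hzeq]; push_cast; ring
        rw [hzz, norm_mul, Complex.norm_exp_ofReal_mul_I, mul_one, Complex.norm_real, Real.norm_eq_abs]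
        rcases abs_cases (a - b) with ⟨h, _⟩ | ⟨h, _⟩ <;> rw [h] <;> linarith
      rw [heq, norm_mul, habse, mul_one]
      calc ‖w - (b:ℂ) * Complex.exp ((θ₁:ℂ) * Complex.I)‖
          ≤ ‖w - z‖ + ‖z - (b:ℂ) * Complex.exp ((θ₁:ℂ) * Complex.I)‖ := hsplit
        _ ≤ 2 * ‖w - z‖ := by linarith
        _ < ℓ := by linarith
    have hEfact : w * Complex.exp (-(θ₁:ℂ) * Complex.I) - (b:ℂ)
        = (b:ℂ) * (Complex.exp ((δ:ℂ) * Complex.I) - 1) := by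
      rw [← h2]; ring
    have hX0 : 0 ≤ ‖Complex.exp ((δ:ℂ) * Complex.I) - 1‖ := norm_nonneg _
    have hXb : b * ‖Complex.exp ((δ:ℂ) * Complex.I) - 1‖ < ℓ := by
      have : ‖(b:ℂ) * (Complex.exp ((δ:ℂ) * Complex.I) - 1)‖ < ℓ := by
        rw [← hEfact]; exact hkey
      rwa [norm_mul, Complex.norm_real, Real.norm_eq_abs, abs_of_nonneg (norm_nonneg w)] at this
    have hX : ‖Complex.exp ((δ:ℂ) * Complex.I) - 1‖ < 8/5 * ℓ := by nlinarith
    have hre : (Complex.exp ((δ:ℂ) * Complex.I) - 1).re = Real.cos δ - 1 := by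
      simp [Complex.exp_ofReal_mul_I_re]
    have him : (Complex.exp ((δ:ℂ) * Complex.I) - 1).im = Real.sin δ := by
      simp [Complex.exp_ofReal_mul_I_im]
    have hcos : (3:ℝ)/5 < Real.cos δ := by
      have h1 := Complex.abs_re_le_norm (Complex.exp ((δ:ℂ) * Complex.I) - 1)
      rw [hre] at h1
      have := abs_le.mp (h1.trans hX.le)
      nlinarith [this.1]
    have hδπ : |δ| ≤ Real.pi := Complex.abs_arg_le_pi _
    have hhalf : |δ| ≤ Real.pi / 2 := by
      by_contra hcon
      push_neg at hcon
      have : Real.cos |δ| ≤ 0 :=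
        Real.cos_nonpos_of_pi_div_two_le_of_le hcon.le (by linarith)
      rw [Real.cos_abs] at this; linarith
    have hsin : 2 / Real.pi * |δ| ≤ Real.sin |δ| := Real.mul_le_sin (abs_nonneg δ) hhalf
    clear_value δ
    have hsinabs : Real.sin |δ| ≤ |Real.sin δ| := by
      rcases abs_cases δ with ⟨h, _⟩ | ⟨h, _⟩
      · rw [h]; exact le_abs_self _
      · rw [h, Real.sin_neg]; exact neg_le_abs _
    have himle : |Real.sin δ| ≤ ‖Complex.exp ((δ:ℂ) * Complex.I) - 1‖ := by
      rw [← him]; exact Complex.abs_im_le_norm _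
    have hs85 : Real.sin |δ| ≤ 8/5*ℓ := by linarith
    have h2d : 2 * |δ| ≤ Real.pi * Real.sin |δ| := by
      rw [div_mul_eq_mul_div, div_le_iff₀ Real.pi_pos] at hsin; linarith
    have hδbound : |δ| ≤ 4 * Real.pi / 5 * ℓ := by
      nlinarith [mul_le_mul_of_nonneg_left hs85 Real.pi_pos.le]
    rw [abs_sub_le_iff]
    have h1 := abs_le.mp hθ₁
    have h2' := abs_le.mp hδbound
    constructor <;> nlinarith [h1.1, h1.2, h2'.1, h2'.2, Real.pi_pos]
  · -- large arc: any argument works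
    push_neg at hcase
    set δ := (w * Complex.exp (-(θ₀:ℂ) * Complex.I)).arg with hδ
    refine ⟨θ₀ + δ, ?_, polar_eq w θ₀⟩
    have hδπ : |δ| ≤ Real.pi := Complex.abs_arg_le_pi _
    clear_value δ
    have : θ₀ + δ - θ₀ = δ := by ring
    rw [this]
    calc |δ| ≤ Real.pi := hδπ
      _ ≤ 8 * Real.pi * ℓ / 2 := by nlinarith [Real.pi_pos]

lemma ball_facts {z w : ℂ} (hwz : w ∈ ball z ((1 - ‖z‖) / 2)) :
    0 < 1 - ‖z‖ ∧ 1 - ‖z‖ < 2 * (1 - ‖w‖) ∧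
    2/3 * (1 - ‖w‖) ≤ 1 - ‖z‖ ∧ z ∈ ball w (1 - ‖w‖) := by
  rw [mem_ball, Complex.dist_eq] at hwz
  have hd0 : 0 ≤ ‖w - z‖ := norm_nonneg _
  have h0 : 0 < 1 - ‖z‖ := by linarith
  have ht1 : ‖z‖ - ‖w‖ ≤ ‖w - z‖ := by
    have := norm_sub_norm_le z w
    calc ‖z‖ - ‖w‖ ≤ ‖z - w‖ := this
      _ = ‖w - z‖ := norm_sub_rev z w
  have ht2 : ‖w‖ - ‖z‖ ≤ ‖w - z‖ := by
    have := norm_sub_norm_le w z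
    exact this
  refine ⟨h0, by linarith, by linarith, ?_⟩
  rw [mem_ball, Complex.dist_eq, norm_sub_rev]
  linarith

set_option maxHeartbeats 1000000 in
theorem stmt7 :
    ∃ c > (0 : ℝ), ∃ C > (0 : ℝ), ∀ θ₀ ℓ : ℝ, 0 < ℓ → ℓ ≤ 2 * Real.pi →
      ∀ w ∈ ball (0 : ℂ) 1,
        (Real.pi)⁻¹ *
            ∫ z in carlesonBox θ₀ ℓ,
              (1 - ‖z‖)⁻¹ *
                Set.indicator (ball z ((1 - ‖z‖) / 2)) (fun _ => (1 : ℝ)) w ∂volume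
          ≤ C * (1 - ‖w‖) *
              Set.indicator (carlesonBox θ₀ (c * ℓ)) (fun _ => (1 : ℝ)) w := by
  have hπ := Real.pi_pos
  refine ⟨8 * Real.pi, by positivity, 2, by norm_num, ?_⟩
  intro θ₀ ℓ hℓ hℓ2 w hw
  have hbw : ‖w‖ < 1 := by
    simpa using mem_ball_zero_iff.mp hw
  have hw0 : 0 < 1 - ‖w‖ := by linarith
  set f : ℂ → ℝ := fun z => (1 - ‖z‖)⁻¹ *
      Set.indicator (ball z ((1 - ‖z‖) / 2)) (fun _ => (1:ℝ)) w with hfdef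
  set g : ℂ → ℝ := fun z => 3/2 * (1 - ‖w‖)⁻¹ *
      Set.indicator (ball w (1 - ‖w‖)) (fun _ => (1:ℝ)) z with hgdef
  have hg0 : ∀ z, 0 ≤ g z := by
    intro z
    have : (0:ℝ) ≤ Set.indicator (ball w (1 - ‖w‖)) (fun _ => (1:ℝ)) z :=
      Set.indicator_nonneg (fun _ _ => zero_le_one) z
    have h32 : (0:ℝ) ≤ 3/2 * (1 - ‖w‖)⁻¹ := by positivity
    exact mul_nonneg h32 this
  have hf0 : ∀ z, 0 ≤ f z := by
    intro z
    by_cases h : w ∈ ball z ((1 - ‖z‖) / 2)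
    · have h0 := (ball_facts h).1
      simp only [hfdef, Set.indicator_of_mem h, mul_one]
      positivity
    · simp [hfdef, Set.indicator_of_notMem h]
  have hpt : ∀ z, f z ≤ g z := by
    intro z
    by_cases h : w ∈ ball z ((1 - ‖z‖) / 2)
    · obtain ⟨h0, h2, h3, hzb⟩ := ball_facts h
      simp only [hfdef, hgdef, Set.indicator_of_mem h, Set.indicator_of_mem hzb, mul_one]
      have heq : (3:ℝ)/2 * (1 - ‖w‖)⁻¹ = (2/3 * (1 - ‖w‖))⁻¹ := by
        rw [mul_inv]; norm_num
      rw [heq]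
      exact inv_anti₀ (by positivity) h3
    · have : f z = 0 := by simp [hfdef, Set.indicator_of_notMem h]
      rw [this]; exact hg0 z
  by_cases hmem : w ∈ carlesonBox θ₀ (8 * Real.pi * ℓ)
  · -- positive case
    have hU : IsOpen {z : ℂ | ‖w - z‖ < (1 - ‖z‖) / 2} :=
      isOpen_lt (continuous_norm.comp (continuous_const.sub continuous_id))
        ((continuous_const.sub continuous_norm).div_const 2)
    have hfeq : ∀ z, f z = (1 - ‖z‖)⁻¹ *
        Set.indicator {z : ℂ | ‖w - z‖ < (1 - ‖z‖) / 2}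
          (fun _ => (1:ℝ)) z := by
      intro z
      by_cases h : w ∈ ball z ((1 - ‖z‖) / 2)
      · have hz : z ∈ {z : ℂ | ‖w - z‖ < (1 - ‖z‖) / 2} := by
          rw [mem_ball, Complex.dist_eq] at h; exact h
        simp only [hfdef, Set.indicator_of_mem h, Set.indicator_of_mem hz]
      · have hz : z ∉ {z : ℂ | ‖w - z‖ < (1 - ‖z‖) / 2} := by
          rw [mem_ball, Complex.dist_eq] at h; exact h
        simp only [hfdef, Set.indicator_of_notMem h, Set.indicator_of_notMem hz]
    have hmf : AEStronglyMeasurable f (volume.restrict (carlesonBox θ₀ ℓ)) := by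
      have hmeas : Measurable f := by
        rw [show f = fun z => (1 - ‖z‖)⁻¹ *
            Set.indicator {z : ℂ | ‖w - z‖ < (1 - ‖z‖) / 2}
              (fun _ => (1:ℝ)) z from funext hfeq]
        exact ((continuous_const.sub continuous_norm).measurable.inv).mul
          (measurable_const.indicator hU.measurableSet)
      exact hmeas.aestronglyMeasurable
    have hgint : Integrable g volume := by
      have : Integrable (Set.indicator (ball w (1 - ‖w‖)) (fun _ => (1:ℝ))) volume :=
        (integrable_indicator_iff measurableSet_ball).mpr
          (integrableOn_const measure_ball_lt_top.ne)
      exact this.const_mul _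
    have hfint : IntegrableOn f (carlesonBox θ₀ ℓ) volume :=
      Integrable.mono' hgint.restrict hmf
        (Filter.Eventually.of_forall fun z => by
          rw [Real.norm_of_nonneg (hf0 z)]; exact hpt z)
    have h1 : ∫ z in carlesonBox θ₀ ℓ, f z ≤ ∫ z in carlesonBox θ₀ ℓ, g z :=
      setIntegral_mono_on hfint hgint.integrableOn (carlesonBox_measurable θ₀ ℓ)
        (fun z _ => hpt z)
    have h2 : ∫ z in carlesonBox θ₀ ℓ, g z ≤ ∫ z, g z :=
      setIntegral_le_integral hgint (Filter.Eventually.of_forall hg0)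
    have h3 : ∫ z, g z = 3/2 * (1 - ‖w‖)⁻¹ * ((1 - ‖w‖)^2 * Real.pi) := by
      rw [hgdef]
      rw [integral_const_mul]
      have hone : (fun _ : ℂ => (1:ℝ)) = (1 : ℂ → ℝ) := rfl
      rw [hone, integral_indicator_one measurableSet_ball, measureReal_def, Complex.volume_ball]
      rw [ENNReal.toReal_mul, ENNReal.toReal_pow, ENNReal.toReal_ofReal hw0.le]
      norm_num [NNReal.coe_real_pi]
    have hval : ∫ z in carlesonBox θ₀ ℓ, f z ≤ 3/2 * (1 - ‖w‖) * Real.pi := by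
      have := h1.trans (h2.trans_eq h3)
      calc ∫ z in carlesonBox θ₀ ℓ, f z
          ≤ 3/2 * (1 - ‖w‖)⁻¹ * ((1 - ‖w‖)^2 * Real.pi) := this
        _ = 3/2 * (1 - ‖w‖) * Real.pi := by field_simp
    rw [Set.indicator_of_mem hmem, mul_one]
    calc Real.pi⁻¹ * ∫ z in carlesonBox θ₀ ℓ, f z
        ≤ Real.pi⁻¹ * (3/2 * (1 - ‖w‖) * Real.pi) := by
          exact mul_le_mul_of_nonneg_left hval (by positivity)
      _ = 3/2 * (1 - ‖w‖) := by field_simp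
      _ ≤ 2 * (1 - ‖w‖) := by linarith
  · -- zero case
    have hzero : ∀ z ∈ carlesonBox θ₀ ℓ, f z = 0 := by
      intro z hz
      by_cases h : w ∈ ball z ((1 - ‖z‖) / 2)
      · exact absurd (mem_box_enlarge hℓ hz hw h) hmem
      · simp [hfdef, Set.indicator_of_notMem h]
    have hint0 : ∫ z in carlesonBox θ₀ ℓ, f z = 0 := by
      rw [setIntegral_congr_fun (carlesonBox_measurable θ₀ ℓ) hzero]
      simp
    rw [hint0, Set.indicator_of_notMem hmem]
    simp
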